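/- The curve t ↦ (x₁,...,x₁₂) with x₁ = t, x₂ = t⁻¹(1/2 - (√3/2)i), x₃ = -t, x₄ = t⁻¹(-1/2 - (√3/2)i), x₅ = t(-1/2 + (√3/2)i), x₆ = t⁻¹(1/2 + (√3/2)i), x₇ = -t, x₈ = t⁻¹(-1/2 + (√3/2)i), x₉ = t, x₁₀ = t⁻¹(1/2 + (√3/2)i), x₁₁ = t(1/2 - (√3/2)i), x₁₂ = t⁻¹(-1/2 - (√3/2)i), for t ∈ ℂ*, satisfies all twelve equations of the cyclic 12-roots system exactly. -/

import Mathlib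

open Complex Finset

/-- The `k`-th cyclic equation: `Σ_{j} Π_{i=0}^{k-1} x_{j+i}` with indices
taken cyclically modulo `n`. -/
noncomputable def cyclicEq (n : ℕ) [NeZero n] (k : ℕ) (x : ZMod n → ℂ) : ℂ :=
  ∑ j : ZMod n, ∏ i ∈ Finset.range k, x (j + (i : ZMod n))

/-- `x` is a cyclic `n`-roots solution if the first `n-1` cyclic equations
vanish and the product of all coordinates is 1. -/
def IsCyclicRoot (n : ℕ) [NeZero n] (x : ZMod n → ℂ) : Prop :=
  (∀ k, 1 ≤ k → k < n → cyclicEq n k x = 0) ∧ ∏ j : ZMod n, x j = 1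

set_option maxHeartbeats 2000000 in
/-- The explicit curve `t ↦ (x₁,...,x₁₂)` solves the cyclic 12-roots system
exactly for every `t ∈ ℂ*`. -/
theorem stmt16 (t : ℂ) (ht : t ≠ 0) :
    let ω : ℂ := (Real.sqrt 3 / 2 : ℝ) * I
    let x : ZMod 12 → ℂ := fun j =>
      ![t, t⁻¹ * (1/2 - ω), -t, t⁻¹ * (-(1/2) - ω),
        t * (-(1/2) + ω), t⁻¹ * (1/2 + ω), -t, t⁻¹ * (-(1/2) + ω),
        t, t⁻¹ * (1/2 + ω), t * (1/2 - ω), t⁻¹ * (-(1/2) - ω)] (Fin.ofNat 12 j.val)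
    IsCyclicRoot 12 x := by
  intro ω x
  have hs : ((Real.sqrt 3 : ℝ) : ℂ)^2 = 3 := by
    norm_cast
    rw [Real.sq_sqrt] <;> norm_num
  have hω : ω^2 = -(3/4) := by
    show (((Real.sqrt 3 / 2 : ℝ) : ℂ) * I)^2 = _
    rw [mul_pow, I_sq]
    push_cast
    rw [div_pow, hs]
    norm_num
  have hu : t * t⁻¹ = 1 := mul_inv_cancel₀ ht
  have key : ∀ g : ZMod 12 → ℂ, ∑ j : ZMod 12, g j =
      g 0 + (g 1 + (g 2 + (g 3 + (g 4 + (g 5 + (g 6 + (g 7 +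
        (g 8 + (g 9 + (g 10 + g 11)))))))))) := by
    intro g
    let g' : Fin 12 → ℂ := g
    show ∑ j : Fin 12, g' j = _
    rw [Fin.sum_univ_succ, Fin.sum_univ_succ, Fin.sum_univ_succ, Fin.sum_univ_succ,
      Fin.sum_univ_succ, Fin.sum_univ_succ, Fin.sum_univ_succ, Fin.sum_univ_succ,
      Fin.sum_univ_succ, Fin.sum_univ_succ, Fin.sum_univ_succ, Fin.sum_univ_one]
    norm_num [Fin.succ]
    rfl
  have keyP : ∏ j : ZMod 12, x j =
      x 0 * (x 1 * (x 2 * (x 3 * (x 4 * (x 5 * (x 6 * (x 7 *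
        (x 8 * (x 9 * (x 10 * x 11)))))))))) := by
    show ∏ j : Fin 12, x j = _
    rw [Fin.prod_univ_succ, Fin.prod_univ_succ, Fin.prod_univ_succ, Fin.prod_univ_succ,
      Fin.prod_univ_succ, Fin.prod_univ_succ, Fin.prod_univ_succ, Fin.prod_univ_succ,
      Fin.prod_univ_succ, Fin.prod_univ_succ, Fin.prod_univ_succ, Fin.prod_univ_one]
    rfl
  have e0 : x 0 = t := rfl
  have e1 : x 1 = t⁻¹ * (1/2 - ω) := rfl
  have e2 : x 2 = -t := rfl
  have e3 : x 3 = t⁻¹ * (-(1/2) - ω) := rfl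
  have e4 : x 4 = t * (-(1/2) + ω) := rfl
  have e5 : x 5 = t⁻¹ * (1/2 + ω) := rfl
  have e6 : x 6 = -t := rfl
  have e7 : x 7 = t⁻¹ * (-(1/2) + ω) := rfl
  have e8 : x 8 = t := rfl
  have e9 : x 9 = t⁻¹ * (1/2 + ω) := rfl
  have e10 : x 10 = t * (1/2 - ω) := rfl
  have e11 : x 11 = t⁻¹ * (-(1/2) - ω) := rfl
  have e12 : x 12 = t := rfl
  have e13 : x 13 = t⁻¹ * (1/2 - ω) := rfl
  have e14 : x 14 = -t := rfl
  have e15 : x 15 = t⁻¹ * (-(1/2) - ω) := rfl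
  have e16 : x 16 = t * (-(1/2) + ω) := rfl
  have e17 : x 17 = t⁻¹ * (1/2 + ω) := rfl
  have e18 : x 18 = -t := rfl
  have e19 : x 19 = t⁻¹ * (-(1/2) + ω) := rfl
  have e20 : x 20 = t := rfl
  have e21 : x 21 = t⁻¹ * (1/2 + ω) := rfl
  constructor
  · intro k hk1 hk2
    interval_cases k <;>
    · rw [cyclicEq, key]
      norm_num [Finset.prod_range_succ, e0, e1, e2, e3, e4, e5, e6, e7, e8, e9, e10, e11, e12, e13, e14, e15, e16, e17, e18, e19, e20, e21]
      first
      | ring1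
      | linear_combination (((-1:ℂ)/4)*t^4*(t⁻¹)^4 + (2:ℂ)*t^4*(t⁻¹)^4*ω^2
          + (-4:ℂ)*t^4*(t⁻¹)^4*ω^4) * hω
  · rw [keyP, e0, e1, e2, e3, e4, e5, e6, e7, e8, e9, e10, e11]
    linear_combination ((1:ℂ) + t*t⁻¹ + t^2*(t⁻¹)^2 + t^3*(t⁻¹)^3 + t^4*(t⁻¹)^4
        + t^5*(t⁻¹)^5) * hu
      + (((-85:ℂ)/64)*t^6*(t⁻¹)^6 + ((27:ℂ)/16)*t^6*(t⁻¹)^6*ω^2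
        + ((-7:ℂ)/4)*t^6*(t⁻¹)^6*ω^4 + (1:ℂ)*t^6*(t⁻¹)^6*ω^6) * hω
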